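/- Suppose a real sequence {h(k)} satisfies h(s+(t+1)T) ≤ (1−c) h(s+tT) + 2L β_{s,t} for all s ∈ {0,…,T−1} and t ∈ ℕ, where c ∈ (0,1), L > 0, T ≥ 1, β_{s,t} = Σ_{r=s+tT}^{s+(t+1)T−1} α_r, and α_k ≥ 0 with Σ_{k=0}^∞ α_k² < ∞ and h(k) ≥ 0. Then Σ_{k=0}^∞ α_k h(k) < ∞. -/

import Mathlib

set_option maxHeartbeats 2000000 in
theorem stmt14_aux (h : ℕ → ℝ) (hh : ∀ k, 0 ≤ h k)
    (α : ℕ → ℝ) (hα : ∀ k, 0 ≤ α k) (hα2 : Summable (fun k => α k ^ 2))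
    (c : ℝ) (hc0 : 0 < c) (hc1 : c < 1) (L : ℝ) (hL : 0 < L)
    (T : ℕ) (hT : 1 ≤ T)
    (hrec : ∀ s < T, ∀ t : ℕ,
      h (s + (t + 1) * T) ≤ (1 - c) * h (s + t * T)
        + 2 * L * ∑ r ∈ Finset.Ico (s + t * T) (s + (t + 1) * T), α r) :
    Summable (fun k => α k * h k) := by
  -- Block sums
  set A : ℕ → ℝ := fun t => ∑ k ∈ Finset.Ico (t * T) ((t + 1) * T), α k with hA
  set G : ℕ → ℝ := fun t => ∑ s ∈ Finset.range T, h (s + t * T) with hG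
  have hTle : ∀ t : ℕ, t * T ≤ (t + 1) * T := fun t =>
    Nat.mul_le_mul_right T (Nat.le_succ t)
  have hAnn : ∀ t, 0 ≤ A t := fun t => Finset.sum_nonneg fun k _ => hα k
  have hGnn : ∀ t, 0 ≤ G t := fun t => Finset.sum_nonneg fun s _ => hh _
  -- decomposition of range (n*T) into blocks
  have blockSum : ∀ (f : ℕ → ℝ) (n : ℕ),
      ∑ k ∈ Finset.range (n * T), f k
        = ∑ t ∈ Finset.range n, ∑ k ∈ Finset.Ico (t * T) ((t + 1) * T), f k := by
    intro f n
    induction n with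
    | zero => simp
    | succ n ih =>
      rw [Finset.sum_range_succ, ← ih, Finset.range_eq_Ico, Finset.range_eq_Ico]
      exact (Finset.sum_Ico_consecutive f (Nat.zero_le _) (hTle n)).symm
  -- P t: block sums of squares, summable
  set P : ℕ → ℝ := fun t => ∑ k ∈ Finset.Ico (t * T) ((t + 1) * T), α k ^ 2 with hP
  have hPsum : Summable P := by
    apply summable_of_sum_range_le (c := ∑' k, α k ^ 2)
      (fun t => Finset.sum_nonneg fun k _ => sq_nonneg _)
    intro n
    rw [show (∑ t ∈ Finset.range n, P t)
        = ∑ k ∈ Finset.range (n * T), α k ^ 2 from (blockSum _ n).symm]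
    exact Summable.sum_le_tsum _ (fun k _ => sq_nonneg _) hα2
  -- A t ^ 2 ≤ T * P t, hence Summable (A^2)
  have hA2le : ∀ t, A t ^ 2 ≤ (T : ℝ) * P t := by
    intro t
    have hcard : (Finset.Ico (t * T) ((t + 1) * T)).card = T := by
      rw [Nat.card_Ico]
      have : (t + 1) * T = t * T + T := by ring
      omega
    have := sq_sum_le_card_mul_sum_sq (s := Finset.Ico (t * T) ((t + 1) * T)) (f := α)
    rw [hcard] at this
    exact_mod_cast this
  have hA2sum : Summable (fun t => A t ^ 2) :=
    Summable.of_nonneg_of_le (fun t => sq_nonneg _) hA2le (hPsum.mul_left _)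
  -- recursion for G
  set K : ℝ := 2 * L * T with hK
  have hKpos : 0 < K := by positivity
  have hGrec : ∀ t, G (t + 1) ≤ (1 - c) * G t + K * (A t + A (t + 1)) := by
    intro t
    have h1 : G (t + 1) ≤ ∑ s ∈ Finset.range T,
        ((1 - c) * h (s + t * T)
          + 2 * L * ∑ r ∈ Finset.Ico (s + t * T) (s + (t + 1) * T), α r) :=
      Finset.sum_le_sum fun s hs => hrec s (Finset.mem_range.mp hs) t
    have h2 : ∀ s ∈ Finset.range T,
        (∑ r ∈ Finset.Ico (s + t * T) (s + (t + 1) * T), α r) ≤ A t + A (t + 1) := by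
      intro s hs
      have hsT : s < T := Finset.mem_range.mp hs
      have hsub : Finset.Ico (s + t * T) (s + (t + 1) * T)
          ⊆ Finset.Ico (t * T) ((t + 2) * T) := by
        apply Finset.Ico_subset_Ico
        · omega
        · have : s + (t + 1) * T ≤ (t + 2) * T := by nlinarith [hsT, Nat.succ_mul t T]
          omega
      calc (∑ r ∈ Finset.Ico (s + t * T) (s + (t + 1) * T), α r)
          ≤ ∑ r ∈ Finset.Ico (t * T) ((t + 2) * T), α r :=
            Finset.sum_le_sum_of_subset_of_nonneg hsub (fun k _ _ => hα k)
        _ = A t + A (t + 1) := by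
            rw [hA]
            rw [← Finset.sum_Ico_consecutive α (hTle t) (hTle (t + 1))]
    calc G (t + 1) ≤ _ := h1
      _ ≤ ∑ s ∈ Finset.range T, ((1 - c) * h (s + t * T) + 2 * L * (A t + A (t + 1))) := by
          apply Finset.sum_le_sum
          intro s hs
          have := h2 s hs
          nlinarith [hL]
      _ = (1 - c) * G t + K * (A t + A (t + 1)) := by
          rw [Finset.sum_add_distrib, ← Finset.mul_sum, Finset.sum_const,
            Finset.card_range, nsmul_eq_mul, hG, hK]
          push_cast
          ring
  -- squares of G satisfy contractive recursion with summable forcing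
  have hGsq : ∀ t, G (t + 1) ^ 2
      ≤ (1 - c) * G t ^ 2 + (2 * K ^ 2 / c) * (A t ^ 2 + A (t + 1) ^ 2) := by
    intro t
    have h1 : G (t + 1) ^ 2 ≤ ((1 - c) * G t + K * (A t + A (t + 1))) ^ 2 := by
      have hrhs : 0 ≤ (1 - c) * G t + K * (A t + A (t + 1)) := by
        have := hGnn t; have := hAnn t; have := hAnn (t + 1); nlinarith
      nlinarith [hGnn (t + 1), hGrec t]
    have h2 : ((1 - c) * G t + K * (A t + A (t + 1))) ^ 2
        ≤ (1 - c) * G t ^ 2 + (K * (A t + A (t + 1))) ^ 2 / c := by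
      rw [← mul_le_mul_iff_right₀ hc0]
      have he : c * ((1 - c) * G t ^ 2 + (K * (A t + A (t + 1))) ^ 2 / c)
          = c * (1 - c) * G t ^ 2 + (K * (A t + A (t + 1))) ^ 2 := by
        field_simp
      rw [he]
      nlinarith [mul_nonneg (by linarith : (0:ℝ) ≤ 1 - c)
        (sq_nonneg (c * G t - K * (A t + A (t + 1))))]
    have h3 : (K * (A t + A (t + 1))) ^ 2 / c
        ≤ (2 * K ^ 2 / c) * (A t ^ 2 + A (t + 1) ^ 2) := by
      rw [div_le_iff₀ hc0] at *
      have : (K * (A t + A (t + 1))) ^ 2 ≤ 2 * K ^ 2 * (A t ^ 2 + A (t + 1) ^ 2) := by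
        nlinarith [sq_nonneg (A t - A (t + 1)), sq_nonneg K]
      calc (K * (A t + A (t + 1))) ^ 2 ≤ 2 * K ^ 2 * (A t ^ 2 + A (t + 1) ^ 2) := this
        _ = 2 * K ^ 2 / c * (A t ^ 2 + A (t + 1) ^ 2) * c := by field_simp
    linarith
  clear_value A G P
  -- Summable G^2
  set S : ℝ := ∑' t, A t ^ 2 with hS
  have hSnn : 0 ≤ S := tsum_nonneg fun t => sq_nonneg _
  have hG2sum : Summable (fun t => G t ^ 2) := by
    apply summable_of_sum_range_le (c := (G 0 ^ 2 + (2 * K ^ 2 / c) * (2 * S)) / c)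
      (fun t => sq_nonneg _)
    intro n
    have key : ∀ n, ∑ t ∈ Finset.range n, G t ^ 2
        ≤ G 0 ^ 2 + (1 - c) * ∑ t ∈ Finset.range n, G t ^ 2
          + (2 * K ^ 2 / c) * (2 * S) := by
      intro n
      cases n with
      | zero =>
        simp
        have hD : (0:ℝ) ≤ 2 * K ^ 2 / c := by positivity
        nlinarith [sq_nonneg (G 0), mul_nonneg hD (by linarith : (0:ℝ) ≤ 2 * S)]
      | succ m =>
        have e1 : ∑ t ∈ Finset.range (m + 1), G t ^ 2
            = G 0 ^ 2 + ∑ t ∈ Finset.range m, G (t + 1) ^ 2 := by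
          rw [Finset.sum_range_succ' (fun t => G t ^ 2) m]; ring
        have e2 : ∑ t ∈ Finset.range m, G (t + 1) ^ 2
            ≤ (1 - c) * ∑ t ∈ Finset.range m, G t ^ 2
              + (2 * K ^ 2 / c) * ∑ t ∈ Finset.range m, (A t ^ 2 + A (t + 1) ^ 2) := by
          rw [Finset.mul_sum, Finset.mul_sum, ← Finset.sum_add_distrib]
          exact Finset.sum_le_sum fun t _ => hGsq t
        have e3 : ∑ t ∈ Finset.range m, (A t ^ 2 + A (t + 1) ^ 2) ≤ 2 * S := by
          rw [Finset.sum_add_distrib]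
          have b1 : ∑ t ∈ Finset.range m, A t ^ 2 ≤ S :=
            Summable.sum_le_tsum _ (fun t _ => sq_nonneg _) hA2sum
          have b2 : ∑ t ∈ Finset.range m, A (t + 1) ^ 2 ≤ S := by
            have : ∑ t ∈ Finset.range m, A (t + 1) ^ 2
                ≤ ∑ t ∈ Finset.range (m + 1), A t ^ 2 := by
              rw [Finset.sum_range_succ' (fun t => A t ^ 2) m]
              nlinarith [sq_nonneg (A 0)]
            exact this.trans (Summable.sum_le_tsum _ (fun t _ => sq_nonneg _) hA2sum)
          linarith
        have mono : ∑ t ∈ Finset.range m, G t ^ 2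
            ≤ ∑ t ∈ Finset.range (m + 1), G t ^ 2 := by
          rw [Finset.sum_range_succ]; nlinarith [sq_nonneg (G m)]
        have hD : 0 ≤ 2 * K ^ 2 / c := by positivity
        calc ∑ t ∈ Finset.range (m + 1), G t ^ 2
            = G 0 ^ 2 + ∑ t ∈ Finset.range m, G (t + 1) ^ 2 := e1
          _ ≤ G 0 ^ 2 + ((1 - c) * ∑ t ∈ Finset.range m, G t ^ 2
              + (2 * K ^ 2 / c) * (2 * S)) := by
              have := mul_le_mul_of_nonneg_left e3 hD
              linarith
          _ ≤ G 0 ^ 2 + (1 - c) * ∑ t ∈ Finset.range (m + 1), G t ^ 2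
              + (2 * K ^ 2 / c) * (2 * S) := by
              have h1c : (0:ℝ) ≤ 1 - c := by linarith
              have := mul_le_mul_of_nonneg_left mono h1c
              linarith
    have hk := key n
    rw [le_div_iff₀ hc0]
    nlinarith [hk]
  -- Summable A*G
  have hAGsum : Summable (fun t => A t * G t) := by
    have hsum : Summable (fun t => (1/2 : ℝ) * (A t ^ 2 + G t ^ 2)) :=
      (hA2sum.add hG2sum).mul_left _
    have hb : ∀ x y : ℝ, x * y ≤ 1/2 * (x ^ 2 + y ^ 2) := by
      intro x y
      nlinarith [sq_nonneg (x - y)]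
    refine Summable.of_nonneg_of_le (fun t => mul_nonneg (hAnn t) (hGnn t))
      (fun t => hb (A t) (G t)) hsum
  -- final comparison
  apply summable_of_sum_range_le (c := ∑' t, A t * G t)
    (fun k => mul_nonneg (hα k) (hh k))
  intro n
  have step1 : ∑ k ∈ Finset.range n, α k * h k
      ≤ ∑ k ∈ Finset.range (n * T), α k * h k := by
    apply Finset.sum_le_sum_of_subset_of_nonneg
    · exact Finset.range_subset_range.mpr (Nat.le_mul_of_pos_right n hT)
    · exact fun k _ _ => mul_nonneg (hα k) (hh k)
  have step2 : ∑ k ∈ Finset.range (n * T), α k * h k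
      ≤ ∑ t ∈ Finset.range n, A t * G t := by
    rw [blockSum (fun k => α k * h k) n]
    apply Finset.sum_le_sum
    intro t _
    have hblock : ∀ k ∈ Finset.Ico (t * T) ((t + 1) * T), α k * h k ≤ α k * G t := by
      intro k hk
      rw [Finset.mem_Ico] at hk
      have hkT : k - t * T < T := by
        have := hk.2
        have : k < T + t * T := by rw [Nat.succ_mul] at this; omega
        omega
      have hkeq : (k - t * T) + t * T = k := by omega
      have hle : h k ≤ G t := by
        have := Finset.single_le_sum (f := fun s => h (s + t * T))
          (fun s _ => hh _) (Finset.mem_range.mpr hkT)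
        rw [hG]
        simpa [hkeq] using this
      exact mul_le_mul_of_nonneg_left hle (hα k)
    calc ∑ k ∈ Finset.Ico (t * T) ((t + 1) * T), α k * h k
        ≤ ∑ k ∈ Finset.Ico (t * T) ((t + 1) * T), α k * G t :=
          Finset.sum_le_sum hblock
      _ = A t * G t := by
          rw [hA, hG]
          rw [← Finset.sum_mul]
  have step3 : ∑ t ∈ Finset.range n, A t * G t ≤ ∑' t, A t * G t :=
    Summable.sum_le_tsum _ (fun t _ => mul_nonneg (hAnn t) (hGnn t)) hAGsum
  linarith


/-- Abstract contraction recursion along residue classes mod `T`: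
if `h(s+(t+1)T) ≤ (1−c)h(s+tT) + 2L β_{s,t}` with `β_{s,t} = Σ_{r=s+tT}^{s+(t+1)T−1} α_r`,
`c ∈ (0,1)`, `h ≥ 0`, `α ≥ 0` square-summable, then `Σ_k α_k h(k) < ∞`. -/
theorem stmt14 (h : ℕ → ℝ) (hh : ∀ k, 0 ≤ h k)
    (α : ℕ → ℝ) (hα : ∀ k, 0 ≤ α k) (hα2 : Summable (fun k => α k ^ 2))
    (c : ℝ) (hc0 : 0 < c) (hc1 : c < 1) (L : ℝ) (hL : 0 < L)
    (T : ℕ) (hT : 1 ≤ T)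
    (hrec : ∀ s < T, ∀ t : ℕ,
      h (s + (t + 1) * T) ≤ (1 - c) * h (s + t * T)
        + 2 * L * ∑ r ∈ Finset.Ico (s + t * T) (s + (t + 1) * T), α r) :
    Summable (fun k => α k * h k) :=
  stmt14_aux h hh α hα hα2 c hc0 hc1 L hL T hT hrec
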